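/- Let p be a prime and G a finite p-group of order p^3 that is normal in some p-group H with G contained in the commutator subgroup D(H). Then G is abelian (isomorphic to one of the abelian groups of order p^3). -/

import Mathlib

open Subgroup
open scoped commutatorElement

namespace Stmt1Aux

variable {p : ℕ}

lemma card_dvd_of_le' {H : Type*} [Group H] [Finite H] {A B : Subgroup H} (h : A ≤ B) :
    Nat.card A ∣ Nat.card B := by
  rw [← Nat.card_congr (Subgroup.subgroupOfEquivOfLe h).toEquiv]
  exact Subgroup.card_subgroup_dvd_card _

lemma card_map_mul' {H H' : Type*} [Group H] [Group H'] [Finite H] (f : H →* H')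
    (G : Subgroup H) :
    Nat.card (G.map f) * Nat.card (f.ker.subgroupOf G) = Nat.card G := by
  have h0 : Nat.card G = Nat.card (↥G ⧸ (f.comp G.subtype).ker) *
      Nat.card (f.comp G.subtype).ker :=
    Subgroup.card_eq_card_quotient_mul_card_subgroup _
  have h1 : Nat.card (↥G ⧸ (f.comp G.subtype).ker) = Nat.card (G.map f) := by
    rw [Nat.card_congr (QuotientGroup.quotientKerEquivRange (f.comp G.subtype)).toEquiv]
    rw [MonoidHom.range_comp, Subgroup.range_subtype]
  have h2 : (f.comp G.subtype).ker = f.ker.subgroupOf G := by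
    rw [← MonoidHom.comap_ker, Subgroup.comap_subtype]
  rw [h0, h1, h2]

/-- a nontrivial normal subgroup of a finite p-group contains a nontrivial central element -/
lemma meets_center {Q : Type*} [Group Q] [Finite Q] (hp : p.Prime) (hQ : IsPGroup p Q)
    (N : Subgroup Q) [N.Normal] (hN : N ≠ ⊥) :
    ∃ z : Q, z ∈ N ⊓ Subgroup.center Q ∧ z ≠ 1 := by
  haveI : Fact p.Prime := ⟨hp⟩
  have hQ' : IsPGroup p (ConjAct Q) := hQ.of_equiv ConjAct.toConjAct
  have hdvd : p ∣ Nat.card ↥N := by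
    obtain ⟨k, hk⟩ := (IsPGroup.iff_card).mp (hQ.to_subgroup N)
    rcases Nat.eq_zero_or_pos k with rfl | hkpos
    · exfalso
      rw [pow_zero] at hk
      exact hN ((Subgroup.eq_bot_iff_card N).mpr hk)
    · exact hk ▸ dvd_pow_self p hkpos.ne'
  have h1fix : (1 : ↥N) ∈ MulAction.fixedPoints (ConjAct Q) ↥N := by
    intro g
    apply Subtype.ext
    rw [ConjAct.Subgroup.val_conj_smul]
    simp [ConjAct.smul_def]
  obtain ⟨b, hb, hb1⟩ :=
    hQ'.exists_fixed_point_of_prime_dvd_card_of_fixed_point (α := ↥N) hdvd h1fix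
  refine ⟨(b : Q), ?_, ?_⟩
  · refine Subgroup.mem_inf.mpr ⟨b.2, Subgroup.mem_center_iff.mpr fun g => ?_⟩
    have := hb (ConjAct.toConjAct g)
    have hval : ConjAct.toConjAct g • (b : Q) = (b : Q) := by
      rw [← ConjAct.Subgroup.val_conj_smul, this]
    rw [ConjAct.smul_def, ConjAct.ofConjAct_toConjAct] at hval
    calc g * (b : Q) = (g * b * g⁻¹) * g := by group
    _ = (b : Q) * g := by rw [hval]
  · intro h
    exact hb1 (Subtype.ext h.symm)



/-- a normal subgroup of order p in a finite p-group is central -/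
lemma le_center_of_card_p {Q : Type*} [Group Q] [Finite Q] (hp : p.Prime) (hQ : IsPGroup p Q)
    (N : Subgroup Q) [N.Normal] (hcard : Nat.card N = p) : N ≤ Subgroup.center Q := by
  have hNbot : N ≠ ⊥ := by
    intro h
    rw [h, Subgroup.card_bot] at hcard
    exact hp.one_lt.ne hcard
  obtain ⟨z, hz, hz1⟩ := meets_center hp hQ N hNbot
  have hle : N ⊓ Subgroup.center Q ≤ N := inf_le_left
  have hdvd : Nat.card (N ⊓ Subgroup.center Q : Subgroup Q) ∣ p :=
    hcard ▸ card_dvd_of_le' hle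
  have hne : N ⊓ Subgroup.center Q ≠ ⊥ := by
    intro h
    rw [h, Subgroup.mem_bot] at hz
    exact hz1 hz
  have h1lt : 1 < Nat.card (N ⊓ Subgroup.center Q : Subgroup Q) :=
    (Subgroup.one_lt_card_iff_ne_bot _).mpr hne
  have hcard2 : Nat.card (N ⊓ Subgroup.center Q : Subgroup Q) = p :=
    ((Nat.dvd_prime hp).mp hdvd).resolve_left h1lt.ne'
  have heq : N ⊓ Subgroup.center Q = N :=
    Subgroup.eq_of_le_of_card_ge hle (by rw [hcard, hcard2])
  rw [← heq]
  exact inf_le_right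

/-- a finite p-group with cyclic abelianization is commutative -/
lemma comm_of_cyclic_ab (hp : p.Prime) (n : ℕ) :
    ∀ {Q : Type u} [Group Q] [Finite Q], Nat.card Q ≤ n → IsPGroup p Q →
      IsCyclic (Q ⧸ commutator Q) → ∀ a b : Q, a * b = b * a := by
  haveI : Fact p.Prime := ⟨hp⟩
  induction n with
  | zero =>
    intro Q _ _ hcard _ _ a b
    exact absurd hcard (by simpa using Nat.card_pos.ne')
  | succ n ih =>
    intro Q _ _ hcard hQ hcyc a b
    haveI := hcyc
    by_cases hbot : commutator Q = ⊥
    · have hmem : ⁅a, b⁆ ∈ commutator Q :=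
        Subgroup.commutator_mem_commutator (Subgroup.mem_top a) (Subgroup.mem_top b)
      rw [hbot, Subgroup.mem_bot] at hmem
      exact commutatorElement_eq_one_iff_commute.mp hmem
    · obtain ⟨z, hz, hz1⟩ := meets_center hp hQ (commutator Q) hbot
      -- find an element of order p in (commutator Q) ⊓ center Q
      set N0 : Subgroup Q := commutator Q ⊓ Subgroup.center Q with hN0def
      have hdvd : p ∣ Nat.card ↥N0 := by
        obtain ⟨k, hk⟩ := IsPGroup.iff_card.mp (hQ.to_subgroup N0)
        rcases Nat.eq_zero_or_pos k with rfl | hkpos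
        · exfalso
          rw [pow_zero] at hk
          rw [(Subgroup.eq_bot_iff_card N0).mpr hk, Subgroup.mem_bot] at hz
          exact hz1 hz
        · exact hk ▸ dvd_pow_self p hkpos.ne'
      obtain ⟨g, hg⟩ := exists_prime_orderOf_dvd_card' (G := ↥N0) p hdvd
      have hgord : orderOf (g : Q) = p := by rw [Subgroup.orderOf_coe]; exact hg
      set N : Subgroup Q := Subgroup.zpowers (g : Q) with hNdef
      have hNcard : Nat.card N = p := by rw [hNdef, Nat.card_zpowers]; exact hgord
      have hNcenter : N ≤ Subgroup.center Q :=
        Subgroup.zpowers_le.mpr ((Subgroup.mem_inf.mp g.2).2)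
      haveI hNnormal : N.Normal := by
        constructor
        intro x hx q
        have hc : q * x = x * q := (Subgroup.mem_center_iff.mp (hNcenter hx) q)
        have : q * x * q⁻¹ = x := by rw [hc]; group
        rw [this]; exact hx
      -- quotient
      have hcardN : Nat.card Q = Nat.card (Q ⧸ N) * Nat.card N :=
        Subgroup.card_eq_card_quotient_mul_card_subgroup N
      have hlt : Nat.card (Q ⧸ N) < Nat.card Q := by
        rw [hcardN, hNcard]
        have h1 : 0 < Nat.card (Q ⧸ N) := Nat.card_pos
        exact (lt_mul_iff_one_lt_right h1).mpr hp.one_lt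
      have hle' : Nat.card (Q ⧸ N) ≤ n := Nat.lt_succ_iff.mp (lt_of_lt_of_le hlt hcard)
      have hQ' : IsPGroup p (Q ⧸ N) := hQ.to_quotient N
      -- cyclic abelianization of the quotient
      have hmapcomm : (commutator Q).map (QuotientGroup.mk' N) = commutator (Q ⧸ N) := by
        rw [_root_.commutator_def, Subgroup.map_commutator,
          Subgroup.map_top_of_surjective _ (QuotientGroup.mk'_surjective N), _root_.commutator_def]
      have hcyc' : IsCyclic ((Q ⧸ N) ⧸ commutator (Q ⧸ N)) := by
        set f0 : Q →* (Q ⧸ N) ⧸ commutator (Q ⧸ N) :=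
          (QuotientGroup.mk' (commutator (Q ⧸ N))).comp (QuotientGroup.mk' N) with hf0
        have hker : ∀ x ∈ commutator Q, f0 x = 1 := by
          intro x hx
          show (QuotientGroup.mk' (commutator (Q ⧸ N))) ((QuotientGroup.mk' N) x) = 1
          rw [← MonoidHom.mem_ker, QuotientGroup.ker_mk', ← hmapcomm]
          exact Subgroup.mem_map_of_mem _ hx
        set f1 := QuotientGroup.lift (commutator Q) f0 hker with hf1
        have hsurj : Function.Surjective f1 := by
          intro y
          obtain ⟨x, hx⟩ := (QuotientGroup.mk'_surjective (commutator (Q ⧸ N))).comp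
            (QuotientGroup.mk'_surjective N) y
          exact ⟨QuotientGroup.mk x, hx⟩
        exact isCyclic_of_surjective f1 hsurj
      have hcommQN : ∀ x y : Q ⧸ N, x * y = y * x := ih hle' hQ' hcyc'
      have hbot' : commutator (Q ⧸ N) = ⊥ := by
        rw [_root_.commutator_def, eq_bot_iff, Subgroup.commutator_le]
        intro g1 _ g2 _
        rw [Subgroup.mem_bot]
        exact commutatorElement_eq_one_iff_commute.mpr (hcommQN g1 g2)
      have hsub : commutator Q ≤ N := by
        intro x hx
        have : (QuotientGroup.mk' N) x ∈ (⊥ : Subgroup (Q ⧸ N)) := by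
          rw [← hbot', ← hmapcomm]
          exact Subgroup.mem_map_of_mem _ hx
        rw [Subgroup.mem_bot] at this
        have hxk : x ∈ (QuotientGroup.mk' N).ker := MonoidHom.mem_ker.mpr this
        rwa [QuotientGroup.ker_mk'] at hxk
      have hkerc : (QuotientGroup.mk' (commutator Q)).ker ≤ Subgroup.center Q := by
        rw [QuotientGroup.ker_mk']
        exact le_trans hsub hNcenter
      exact commutative_of_cyclic_center_quotient (QuotientGroup.mk' (commutator Q)) hkerc a b

end Stmt1Aux

/-- A finite `p`-group `G` of order `p^3` which is normal in a `p`-group `H` and contained in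
the commutator subgroup `D(H)` is abelian. -/
theorem stmt_1 {p : ℕ} (hp : p.Prime) {H : Type*} [Group H] [Finite H]
    (hH : IsPGroup p H) (G : Subgroup H) (hn : G.Normal) (hd : G ≤ commutator H)
    (hcard : Nat.card G = p ^ 3) :
    ∀ a b : ↥G, a * b = b * a := by
  haveI : Fact p.Prime := ⟨hp⟩
  haveI := hn
  have hG : IsPGroup p ↥G := hH.to_subgroup G
  by_contra hcon
  push_neg at hcon
  obtain ⟨a, b, hab⟩ := hcon
  have habH : (a : H) * (b : H) ≠ (b : H) * (a : H) := fun h => hab (Subtype.ext h)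
  set C : Subgroup H := Subgroup.centralizer (G : Set H) with hCdef
  set Z : Subgroup H := C ⊓ G with hZdef
  haveI : Nontrivial ↥G := by
    rw [← Finite.one_lt_card_iff_nontrivial, hcard]
    exact Nat.one_lt_pow (by norm_num) hp.one_lt
  -- Step A : the center of G has order p
  have hZin : Nat.card (Subgroup.center ↥G) = p := by
    have hdvd : Nat.card (Subgroup.center ↥G) ∣ p ^ 3 :=
      hcard ▸ Subgroup.card_subgroup_dvd_card _
    obtain ⟨k, hk3, hk⟩ := (Nat.dvd_prime_pow hp).mp hdvd
    haveI := hG.center_nontrivial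
    have hk0 : k ≠ 0 := by
      intro h
      rw [h, pow_zero] at hk
      exact (Finite.one_lt_card_iff_nontrivial.mpr inferInstance).ne' hk
    have hk3' : k ≠ 3 := by
      intro h
      rw [h] at hk
      have htop := Subgroup.eq_top_of_card_eq (H := Subgroup.center ↥G) (hk.trans hcard.symm)
      exact hab (Subgroup.mem_center_iff.mp (htop ▸ Subgroup.mem_top b) a)
    have hk2 : k ≠ 2 := by
      intro h
      rw [h] at hk
      have hq : Nat.card (↥G ⧸ Subgroup.center ↥G) * p ^ 2 = p ^ 3 := by
        rw [← hk, ← Subgroup.card_eq_card_quotient_mul_card_subgroup (Subgroup.center ↥G), hcard]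
      have hqp : Nat.card (↥G ⧸ Subgroup.center ↥G) = p := by
        have hp2 : 0 < p ^ 2 := pow_pos hp.pos 2
        apply Nat.eq_of_mul_eq_mul_right hp2
        rw [hq]; ring
      haveI : IsCyclic (↥G ⧸ Subgroup.center ↥G) := isCyclic_of_prime_card hqp
      exact hab (commutative_of_cyclic_center_quotient (QuotientGroup.mk' (Subgroup.center ↥G))
        (by rw [QuotientGroup.ker_mk']) a b)
    have hk1 : k = 1 := by omega
    rw [hk1, pow_one] at hk
    exact hk
  have hZle : Z ≤ G := inf_le_right
  have hZsub : Z.subgroupOf G = Subgroup.center ↥G := by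
    ext x
    rw [Subgroup.mem_subgroupOf, Subgroup.mem_center_iff, hZdef, Subgroup.mem_inf]
    constructor
    · rintro ⟨hc, -⟩ g
      exact Subtype.ext (hc (g : H) g.2)
    · intro hc
      refine ⟨?_, x.2⟩
      intro h hh
      exact congrArg Subtype.val (hc ⟨h, hh⟩)
  have hZcard : Nat.card Z = p := by
    rw [← Nat.card_congr (Subgroup.subgroupOfEquivOfLe hZle).toEquiv, hZsub, hZin]
  have hcZG : Nat.card (Z.subgroupOf G) = p := by
    rw [Nat.card_congr (Subgroup.subgroupOfEquivOfLe hZle).toEquiv, hZcard]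
  -- normality of C and Z
  haveI hCn : C.Normal := by
    constructor
    intro c hc h
    rw [hCdef, Subgroup.mem_centralizer_iff] at hc ⊢
    intro g hg
    have hg' : h⁻¹ * g * h ∈ G := by
      have := hn.conj_mem g hg h⁻¹
      simpa using this
    have hcg := hc _ hg'
    calc g * (h * c * h⁻¹) = h * ((h⁻¹ * g * h) * c) * h⁻¹ := by group
    _ = h * (c * (h⁻¹ * g * h)) * h⁻¹ := by rw [hcg]
    _ = (h * c * h⁻¹) * g := by group
  haveI hZn : Z.Normal := by
    constructor
    intro z hz h
    rw [hZdef, Subgroup.mem_inf] at hz ⊢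
    exact ⟨hCn.conj_mem z hz.1 h, hn.conj_mem z hz.2 h⟩
  have hZcenter : Z ≤ Subgroup.center H := Stmt1Aux.le_center_of_card_p hp hH Z hZcard
  have hZc : ∀ z ∈ Z, ∀ h : H, h * z = z * h := fun z hz h =>
    Subgroup.mem_center_iff.mp (hZcenter hz) h
  -- G is generated by a and b
  have hgen : Subgroup.closure {(a : H), (b : H)} = G := by
    set M := Subgroup.closure {(a : H), (b : H)} with hMdef
    have haM : (a : H) ∈ M := Subgroup.subset_closure (by simp)
    have hbM : (b : H) ∈ M := Subgroup.subset_closure (by simp)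
    have hMG : M ≤ G := by
      rw [hMdef, Subgroup.closure_le]
      rintro x hx
      simp only [Set.mem_insert_iff, Set.mem_singleton_iff] at hx
      rcases hx with rfl | rfl
      · exact a.2
      · exact b.2
    have hMdvd : Nat.card M ∣ p ^ 3 := hcard ▸ Stmt1Aux.card_dvd_of_le' hMG
    obtain ⟨k, hk3, hk⟩ := (Nat.dvd_prime_pow hp).mp hMdvd
    have hMncomm : ∃ x y : ↥M, x * y ≠ y * x :=
      ⟨⟨a, haM⟩, ⟨b, hbM⟩, fun h => habH (congrArg Subtype.val h)⟩
    obtain ⟨x, y, hxy⟩ := hMncomm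
    have hcomm : (Nat.card ↥M = 1 ∨ Nat.card ↥M = p ∨ Nat.card ↥M = p ^ 2) → False := by
      rintro (h1 | h1 | h1)
      · haveI : Subsingleton ↥M := (Nat.card_eq_one_iff_unique.mp h1).1
        exact hxy (Subsingleton.elim _ _)
      · haveI := isCyclic_of_prime_card h1
        letI := IsCyclic.commGroup (α := ↥M)
        exact hxy (mul_comm x y)
      · exact hxy (IsPGroup.commutative_of_card_eq_prime_sq h1 x y)
    have hMcard : Nat.card ↥M = p ^ 3 := by
      rcases k with _ | _ | _ | _ | k
      · exact absurd (Or.inl (by simpa using hk)) hcomm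
      · exact absurd (Or.inr (Or.inl (by simpa using hk))) hcomm
      · exact absurd (Or.inr (Or.inr hk)) hcomm
      · exact hk
      · omega
    exact Subgroup.eq_of_le_of_card_ge hMG (by rw [hMcard, hcard])
  -- the subgroup K of elements commuting with G modulo Z
  set K : Subgroup H :=
    { carrier := {h : H | ∀ g ∈ G, ⁅g, h⁆ ∈ Z}
      one_mem' := by
        intro g hg
        rw [commutatorElement_one_right]
        exact Z.one_mem
      mul_mem' := by
        intro h₁ h₂ H1 H2 g hg
        have e : ⁅g, h₁ * h₂⁆ = ⁅g, h₁⁆ * (h₁ * ⁅g, h₂⁆ * h₁⁻¹) := by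
          simp only [commutatorElement_def]; group
        rw [e]
        exact Z.mul_mem (H1 g hg) (hZn.conj_mem _ (H2 g hg) h₁)
      inv_mem' := by
        intro h Hh g hg
        have e : ⁅g, h⁻¹⁆ = h⁻¹ * ⁅g, h⁆⁻¹ * h := by
          simp only [commutatorElement_def]; group
        rw [e]
        have := hZn.conj_mem _ (Z.inv_mem (Hh g hg)) h⁻¹
        simpa using this } with hKdef
  have hKmem : ∀ h : H, h ∈ K ↔ ∀ g ∈ G, ⁅g, h⁆ ∈ Z := fun h => Iff.rfl
  have hCK : C ≤ K := by
    intro c hc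
    rw [hKmem]
    intro g hg
    have hcomm : ⁅g, c⁆ = 1 :=
      commutatorElement_eq_one_iff_commute.mpr (Subgroup.mem_centralizer_iff.mp hc g hg)
    rw [hcomm]
    exact Z.one_mem
  -- relindex bound : |K : C| divides p^2
  have hrel : C.relIndex K ∣ p ^ 2 := by
    have hmemZ : ∀ (k : ↥K) (x : H), x ∈ G → ⁅x, (k : H)⁆ ∈ Z :=
      fun k x hx => (hKmem (k : H)).mp k.2 x hx
    set ψ : ↥K →* ↥Z × ↥Z :=
      { toFun := fun k => (⟨⁅(a : H), (k : H)⁆, hmemZ k _ a.2⟩,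
          ⟨⁅(b : H), (k : H)⁆, hmemZ k _ b.2⟩)
        map_one' := by
          refine Prod.ext (Subtype.ext ?_) (Subtype.ext ?_) <;>
            simp [commutatorElement_one_right]
        map_mul' := by
          intro k₁ k₂
          have key : ∀ x ∈ G, ⁅x, ((k₁ : H) * (k₂ : H))⁆ = ⁅x, (k₁ : H)⁆ * ⁅x, (k₂ : H)⁆ := by
            intro x hx
            have e : ⁅x, (k₁ : H) * (k₂ : H)⁆ =
                ⁅x, (k₁ : H)⁆ * ((k₁ : H) * ⁅x, (k₂ : H)⁆ * (k₁ : H)⁻¹) := by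
              simp only [commutatorElement_def]; group
            have hz : ⁅x, (k₂ : H)⁆ ∈ Z := hmemZ k₂ x hx
            have e1 : (k₁ : H) * ⁅x, (k₂ : H)⁆ * (k₁ : H)⁻¹ = ⁅x, (k₂ : H)⁆ := by
              rw [hZc _ hz (k₁ : H)]
              group
            rw [e, e1]
          refine Prod.ext (Subtype.ext ?_) (Subtype.ext ?_)
          · exact key _ a.2
          · exact key _ b.2 } with hψdef
    have hkerψ : ψ.ker ≤ C.subgroupOf K := by
      intro k hk
      have hk' := MonoidHom.mem_ker.mp hk
      have h1 : ⁅(a : H), (k : H)⁆ = 1 := congrArg (fun q => ((q.1 : ↥Z) : H)) hk'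
      have h2 : ⁅(b : H), (k : H)⁆ = 1 := congrArg (fun q => ((q.2 : ↥Z) : H)) hk'
      have hac : (a : H) * (k : H) = (k : H) * (a : H) :=
        commutatorElement_eq_one_iff_commute.mp h1
      have hbc : (b : H) * (k : H) = (k : H) * (b : H) :=
        commutatorElement_eq_one_iff_commute.mp h2
      rw [Subgroup.mem_subgroupOf, hCdef, Subgroup.mem_centralizer_iff]
      intro g hg
      have hgM : g ∈ Subgroup.closure {(a : H), (b : H)} := by rw [hgen]; exact hg
      have hsub : Subgroup.closure {(a : H), (b : H)} ≤ Subgroup.centralizer {(k : H)} := by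
        rw [Subgroup.closure_le]
        rintro x hx
        simp only [Set.mem_insert_iff, Set.mem_singleton_iff] at hx
        rcases hx with rfl | rfl
        · exact Subgroup.mem_centralizer_singleton_iff.mpr hac
        · exact Subgroup.mem_centralizer_singleton_iff.mpr hbc
      have := Subgroup.mem_centralizer_singleton_iff.mp (hsub hgM)
      exact this
    calc C.relIndex K = (C.subgroupOf K).index := rfl
    _ ∣ ψ.ker.index := Subgroup.index_dvd_of_le hkerψ
    _ = Nat.card ψ.range := Subgroup.index_ker ψ
    _ ∣ p ^ 2 := by
        have h3 : Nat.card ψ.range ∣ Nat.card (↥Z × ↥Z) := Subgroup.card_subgroup_dvd_card _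
        have h4 : Nat.card (↥Z × ↥Z) = p ^ 2 := by rw [Nat.card_prod, hZcard]; ring
        rwa [h4] at h3
  -- index bound : |H : K| divides p
  have hKind : K.index ∣ p := by
    set π := QuotientGroup.mk' Z with hπdef
    set Ghat := G.map π with hGhatdef
    haveI hGhatn : Ghat.Normal := hn.map π (QuotientGroup.mk'_surjective Z)
    have hHhat : IsPGroup p (H ⧸ Z) := hH.to_quotient Z
    have hcm := Stmt1Aux.card_map_mul' π G
    have hkerπ : π.ker.subgroupOf G = Z.subgroupOf G := by rw [hπdef, QuotientGroup.ker_mk']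
    rw [hkerπ, hcZG, hcard] at hcm
    have hGhatcard : Nat.card Ghat = p ^ 2 := by
      apply Nat.eq_of_mul_eq_mul_right hp.pos
      rw [hcm]; ring
    have hKcomap : K = Subgroup.comap π (Subgroup.centralizer (Ghat : Set (H ⧸ Z))) := by
      ext h
      rw [hKmem, Subgroup.mem_comap, Subgroup.mem_centralizer_iff]
      constructor
      · intro hh x hx
        obtain ⟨g, hg, rfl⟩ := Subgroup.mem_map.mp hx
        have hcom : π ⁅g, h⁆ = 1 := (QuotientGroup.eq_one_iff _).mpr (hh g hg)
        rw [map_commutatorElement] at hcom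
        exact commutatorElement_eq_one_iff_commute.mp hcom
      · intro hh g hg
        have hx : π g ∈ (Ghat : Set (H ⧸ Z)) := Subgroup.mem_map_of_mem π hg
        have hcomm := hh (π g) hx
        have hcom : π ⁅g, h⁆ = 1 := by
          rw [map_commutatorElement]
          exact commutatorElement_eq_one_iff_commute.mpr hcomm
        exact (QuotientGroup.eq_one_iff _).mp hcom
    rw [hKcomap, Subgroup.index_comap_of_surjective _ (QuotientGroup.mk'_surjective Z)]
    by_cases hcen : Ghat ≤ Subgroup.center (H ⧸ Z)
    · have htop : Subgroup.centralizer (Ghat : Set (H ⧸ Z)) = ⊤ :=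
        Subgroup.centralizer_eq_top_iff_subset.mpr hcen
      rw [htop, Subgroup.index_top]
      exact one_dvd p
    · set F := Ghat ⊓ Subgroup.center (H ⧸ Z) with hFdef
      haveI hFn : F.Normal := by
        constructor
        intro x hx h
        rw [hFdef, Subgroup.mem_inf] at hx ⊢
        have hxc : h * x = x * h := Subgroup.mem_center_iff.mp hx.2 h
        have hxx : h * x * h⁻¹ = x := by rw [hxc]; group
        rw [hxx]; exact hx
      have hGhatne : Ghat ≠ ⊥ := by
        intro hb
        rw [hb, Subgroup.card_bot] at hGhatcard
        exact (Nat.one_lt_pow (by norm_num) hp.one_lt).ne' hGhatcard.symm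
      have hFcard : Nat.card F = p := by
        obtain ⟨z, hz, hz1⟩ := Stmt1Aux.meets_center hp hHhat Ghat hGhatne
        have hne : F ≠ ⊥ := by
          intro hb
          have hzF : z ∈ F := by rw [hFdef]; exact hz
          rw [hb, Subgroup.mem_bot] at hzF
          exact hz1 hzF
        have hdvd : Nat.card F ∣ p ^ 2 :=
          hGhatcard ▸ Stmt1Aux.card_dvd_of_le' (inf_le_left : F ≤ Ghat)
        obtain ⟨j, hj2, hjF⟩ := (Nat.dvd_prime_pow hp).mp hdvd
        have hj0 : j ≠ 0 := by
          intro h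
          rw [h, pow_zero] at hjF
          exact hne ((Subgroup.eq_bot_iff_card F).mpr hjF)
        have hj2' : j ≠ 2 := by
          intro h
          rw [h] at hjF
          have hFG : F = Ghat :=
            Subgroup.eq_of_le_of_card_ge inf_le_left (by rw [hGhatcard, hjF])
          exact hcen (hFG ▸ (inf_le_right : Ghat ⊓ Subgroup.center (H ⧸ Z) ≤ _))
        have hj1 : j = 1 := by omega
        rw [hj1, pow_one] at hjF
        exact hjF
      set π₂ := QuotientGroup.mk' F with hπ₂def
      set Ghat₂ := Ghat.map π₂ with hGhat₂def
      haveI : Ghat₂.Normal := hGhatn.map π₂ (QuotientGroup.mk'_surjective F)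
      have hcm₂ := Stmt1Aux.card_map_mul' π₂ Ghat
      have hker₂ : π₂.ker.subgroupOf Ghat = F.subgroupOf Ghat := by
        rw [hπ₂def, QuotientGroup.ker_mk']
      have hFGcard : Nat.card (F.subgroupOf Ghat) = p := by
        rw [Nat.card_congr (Subgroup.subgroupOfEquivOfLe (inf_le_left : F ≤ Ghat)).toEquiv, hFcard]
      rw [hker₂, hFGcard, hGhatcard] at hcm₂
      have hGhat₂card : Nat.card Ghat₂ = p := by
        apply Nat.eq_of_mul_eq_mul_right hp.pos
        rw [hcm₂]; ring
      have hGhat₂central : Ghat₂ ≤ Subgroup.center ((H ⧸ Z) ⧸ F) :=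
        Stmt1Aux.le_center_of_card_p hp (hHhat.to_quotient F) Ghat₂ hGhat₂card
      have hcommF : ∀ v ∈ Ghat, ∀ h : H ⧸ Z, ⁅h, v⁆ ∈ F := by
        intro v hv h
        have h1 : π₂ ⁅h, v⁆ = 1 := by
          rw [map_commutatorElement]
          apply commutatorElement_eq_one_iff_commute.mpr
          exact Subgroup.mem_center_iff.mp (hGhat₂central (Subgroup.mem_map_of_mem π₂ hv)) (π₂ h)
        exact (QuotientGroup.eq_one_iff _).mp h1
      have hnotle : ¬ Ghat ≤ F := by
        intro hle'
        have hdd := Stmt1Aux.card_dvd_of_le' hle'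
        rw [hGhatcard, hFcard] at hdd
        have hle2 := Nat.le_of_dvd hp.pos hdd
        rw [pow_two] at hle2
        have h3 : 2 * p ≤ p * p := Nat.mul_le_mul_right p hp.two_le
        have h4 := hp.two_le
        omega
      obtain ⟨v, hvG, hvF⟩ := SetLike.not_le_iff_exists.mp hnotle
      have hFc : ∀ x ∈ F, ∀ h : H ⧸ Z, h * x = x * h := by
        intro x hx h
        exact Subgroup.mem_center_iff.mp
          ((inf_le_right : Ghat ⊓ Subgroup.center (H ⧸ Z) ≤ _) hx) h
      set θ : (H ⧸ Z) →* ↥F :=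
        { toFun := fun h => ⟨⁅h, v⁆, hcommF v hvG h⟩
          map_one' := Subtype.ext (by show ⁅(1 : H ⧸ Z), v⁆ = (1 : H ⧸ Z); rw [commutatorElement_one_left])
          map_mul' := by
            intro h₁ h₂
            apply Subtype.ext
            show ⁅h₁ * h₂, v⁆ = ⁅h₁, v⁆ * ⁅h₂, v⁆
            have e : ⁅h₁ * h₂, v⁆ = (h₁ * ⁅h₂, v⁆ * h₁⁻¹) * ⁅h₁, v⁆ := by
              simp only [commutatorElement_def]; group
            have hz2 : ⁅h₂, v⁆ ∈ F := hcommF v hvG h₂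
            have e1 : h₁ * ⁅h₂, v⁆ * h₁⁻¹ = ⁅h₂, v⁆ := by
              rw [hFc _ hz2 h₁]; group
            rw [e, e1, hFc _ hz2 ⁅h₁, v⁆] } with hθdef
      have hkerθ : θ.ker ≤ Subgroup.centralizer (Ghat : Set (H ⧸ Z)) := by
        intro h hh
        have h1 : ⁅h, v⁆ = 1 := congrArg Subtype.val (MonoidHom.mem_ker.mp hh)
        have hcomm_v : h * v = v * h := commutatorElement_eq_one_iff_commute.mp h1
        have hM2le : Subgroup.zpowers v ⊔ F ≤ Ghat :=
          sup_le (Subgroup.zpowers_le.mpr hvG) inf_le_left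
        have hFM2 : F ≤ Subgroup.zpowers v ⊔ F := le_sup_right
        have hcardM2 : Nat.card (Subgroup.zpowers v ⊔ F : Subgroup (H ⧸ Z)) ∣ p ^ 2 :=
          hGhatcard ▸ Stmt1Aux.card_dvd_of_le' hM2le
        obtain ⟨j, hj2, hj⟩ := (Nat.dvd_prime_pow hp).mp hcardM2
        have hpdvd : p ∣ Nat.card (Subgroup.zpowers v ⊔ F : Subgroup (H ⧸ Z)) :=
          hFcard ▸ Stmt1Aux.card_dvd_of_le' hFM2
        have hj0 : j ≠ 0 := by
          intro hjj
          rw [hjj, pow_zero] at hj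
          rw [hj] at hpdvd
          exact hp.one_lt.ne' (Nat.dvd_one.mp hpdvd)
        have hj1 : j ≠ 1 := by
          intro hjj
          rw [hjj, pow_one] at hj
          have hFeq : F = Subgroup.zpowers v ⊔ F :=
            Subgroup.eq_of_le_of_card_ge hFM2 (by rw [hj, hFcard])
          apply hvF
          rw [hFeq]
          exact (le_sup_left : Subgroup.zpowers v ≤ _) (Subgroup.mem_zpowers v)
        have hj2'' : j = 2 := by omega
        rw [hj2''] at hj
        have hM2G : Subgroup.zpowers v ⊔ F = Ghat :=
          Subgroup.eq_of_le_of_card_ge hM2le (by rw [hj, hGhatcard])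
        rw [Subgroup.mem_centralizer_iff]
        intro x hx
        have hxM : x ∈ Subgroup.zpowers v ⊔ F := by rw [hM2G]; exact hx
        have hsub : Subgroup.zpowers v ⊔ F ≤ Subgroup.centralizer {h} := by
          apply sup_le
          · rw [Subgroup.zpowers_le]
            exact Subgroup.mem_centralizer_singleton_iff.mpr hcomm_v.symm
          · intro x' hx'
            exact Subgroup.mem_centralizer_singleton_iff.mpr (hFc x' hx' h).symm
        exact Subgroup.mem_centralizer_singleton_iff.mp (hsub hxM)
      calc (Subgroup.centralizer (Ghat : Set (H ⧸ Z))).index ∣ θ.ker.index :=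
            Subgroup.index_dvd_of_le hkerθ
      _ = Nat.card θ.range := Subgroup.index_ker θ
      _ ∣ p := by
          have hdd := Subgroup.card_subgroup_dvd_card θ.range
          rwa [hFcard] at hdd
  -- assemble : |H : C| divides p^3
  have hCind : C.index ∣ p ^ 3 := by
    rw [← Subgroup.relIndex_mul_index hCK]
    have h3 : p ^ 3 = p ^ 2 * p := by ring
    rw [h3]
    exact mul_dvd_mul hrel hKind
  have hPcard : Nat.card (H ⧸ C) ∣ p ^ 3 := by
    have hidx : Nat.card (H ⧸ C) = C.index := rfl
    rw [hidx]; exact hCind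
  set πP := QuotientGroup.mk' C with hπPdef
  set Gbar := G.map πP with hGbardef
  have hcmP := Stmt1Aux.card_map_mul' πP G
  have hCG : πP.ker.subgroupOf G = Z.subgroupOf G := by
    rw [hπPdef, QuotientGroup.ker_mk']
    ext x
    rw [Subgroup.mem_subgroupOf, Subgroup.mem_subgroupOf, hZdef, Subgroup.mem_inf]
    exact ⟨fun h => ⟨h, x.2⟩, fun h => h.1⟩
  rw [hCG, hcZG, hcard] at hcmP
  have hGbarcard : Nat.card Gbar = p ^ 2 := by
    apply Nat.eq_of_mul_eq_mul_right hp.pos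
    rw [hcmP]; ring
  have hGbarle : Gbar ≤ commutator (H ⧸ C) := by
    rw [hGbardef]
    calc G.map πP ≤ (commutator H).map πP := Subgroup.map_mono hd
    _ = commutator (H ⧸ C) := by
        rw [_root_.commutator_def, Subgroup.map_commutator,
          Subgroup.map_top_of_surjective _ (QuotientGroup.mk'_surjective C),
          _root_.commutator_def]
  have hp2dvd : p ^ 2 ∣ Nat.card (commutator (H ⧸ C)) :=
    hGbarcard ▸ Stmt1Aux.card_dvd_of_le' hGbarle
  obtain ⟨s, hs⟩ := hp2dvd
  have hlag : Nat.card (H ⧸ C) =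
      Nat.card ((H ⧸ C) ⧸ commutator (H ⧸ C)) * Nat.card (commutator (H ⧸ C)) :=
    Subgroup.card_eq_card_quotient_mul_card_subgroup _
  obtain ⟨t, ht⟩ := hPcard
  have hqdvd : Nat.card ((H ⧸ C) ⧸ commutator (H ⧸ C)) ∣ p := by
    have e : p ^ 2 * p = p ^ 2 * (Nat.card ((H ⧸ C) ⧸ commutator (H ⧸ C)) * s * t) := by
      calc p ^ 2 * p = p ^ 3 := by ring
      _ = Nat.card (H ⧸ C) * t := ht
      _ = _ := by rw [hlag, hs]; ring
    have e2 : p = Nat.card ((H ⧸ C) ⧸ commutator (H ⧸ C)) * s * t :=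
      Nat.eq_of_mul_eq_mul_left (pow_pos hp.pos 2) e
    exact ⟨s * t, by rw [e2]; ring⟩
  haveI : IsCyclic ((H ⧸ C) ⧸ commutator (H ⧸ C)) := isCyclic_of_card_dvd_prime hqdvd
  have hPcomm : ∀ x y : H ⧸ C, x * y = y * x :=
    Stmt1Aux.comm_of_cyclic_ab hp (Nat.card (H ⧸ C)) (le_refl _) (hH.to_quotient C)
      inferInstance
  have hPbot : commutator (H ⧸ C) = ⊥ := by
    rw [_root_.commutator_def, eq_bot_iff, Subgroup.commutator_le]
    intro g1 _ g2 _
    rw [Subgroup.mem_bot]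
    exact commutatorElement_eq_one_iff_commute.mpr (hPcomm g1 g2)
  have hfin : (p : ℕ) ^ 2 ∣ 1 := by
    rw [hPbot, Subgroup.card_bot] at hs
    exact ⟨s, hs⟩
  exact absurd (Nat.dvd_one.mp hfin) (Nat.one_lt_pow (by norm_num) hp.one_lt).ne'
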